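/- arXiv:2505.04077 — 2 statements merged into one kernel-verified Lean document; each statement's English description precedes it below -/
import Mathlib

section
/- Let d ≥ 1 and let a, b > 0 satisfy a + b > d and max{a,b} ≠ d. Then there is a constant C depending only on a, b, d such that for all m ∈ ℤ^d, the sum over n₁ ∈ ℤ^d of 1/(|n₁|^a · |m - n₁|^b) is at most C / |m|^min{a, b, a+b-d}, where |n| denotes max(‖n‖_∞, 1) for n ∈ ℤ^d. -/
/-- For `n ∈ ℤ^d`, `|n| = max(‖n‖_∞, 1)`. -/
noncomputable def znorm {d : ℕ} (n : Fin d → ℤ) : ℝ :=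
  max ((Finset.univ.sup fun i => (n i).natAbs : ℕ) : ℝ) 1

namespace ZN

variable {d : ℕ}

def fsup (n : Fin d → ℤ) : ℕ := Finset.univ.sup fun i => (n i).natAbs

lemma znorm_def (n : Fin d → ℤ) : znorm n = max ((fsup n : ℕ) : ℝ) 1 := rfl

lemma one_le_znorm (n : Fin d → ℤ) : 1 ≤ znorm n := le_max_right _ _

lemma znorm_pos (n : Fin d → ℤ) : 0 < znorm n := lt_of_lt_of_le one_pos (one_le_znorm n)

lemma znorm_eq_cast (n : Fin d → ℤ) : znorm n = ((max (fsup n) 1 : ℕ) : ℝ) := by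
  rw [znorm_def, Nat.cast_max, Nat.cast_one]

lemma fsup_le_znorm (n : Fin d → ℤ) : ((fsup n : ℕ) : ℝ) ≤ znorm n := le_max_left _ _

lemma fsup_add_le (x y : Fin d → ℤ) : fsup (x + y) ≤ fsup x + fsup y := by
  refine Finset.sup_le fun i _ => ?_
  calc ((x + y) i).natAbs = (x i + y i).natAbs := by simp
    _ ≤ (x i).natAbs + (y i).natAbs := Int.natAbs_add_le _ _
    _ ≤ fsup x + fsup y := add_le_add
        (Finset.le_sup (f := fun i => (x i).natAbs) (Finset.mem_univ i))
        (Finset.le_sup (f := fun i => (y i).natAbs) (Finset.mem_univ i))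

lemma znorm_add_le (x y : Fin d → ℤ) : znorm (x + y) ≤ znorm x + znorm y := by
  rw [znorm_def]
  refine max_le ?_ ?_
  · calc ((fsup (x+y) : ℕ) : ℝ) ≤ ((fsup x + fsup y : ℕ) : ℝ) := by
          exact_mod_cast fsup_add_le x y
      _ ≤ znorm x + znorm y := by
          push_cast; exact add_le_add (fsup_le_znorm x) (fsup_le_znorm y)
  · linarith [one_le_znorm x, one_le_znorm y]

lemma znorm_neg (x : Fin d → ℤ) : znorm (-x) = znorm x := by
  unfold znorm; simp

lemma znorm_sub_rev (x y : Fin d → ℤ) : znorm (x - y) = znorm (y - x) := by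
  rw [← znorm_neg (x - y), neg_sub]

lemma znorm_tri (x y : Fin d → ℤ) : znorm x ≤ znorm (x - y) + znorm y := by
  calc znorm x = znorm ((x - y) + y) := by rw [sub_add_cancel]
    _ ≤ _ := znorm_add_le _ _


noncomputable def box (d K : ℕ) : Finset (Fin d → ℤ) := Finset.Icc (fun _ => -(K : ℤ)) (fun _ => (K : ℤ))

lemma mem_box {K : ℕ} {n : Fin d → ℤ} : n ∈ box d K ↔ fsup n ≤ K := by
  simp only [box, Finset.mem_Icc, Pi.le_def, fsup, Finset.sup_le_iff, Finset.mem_univ,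
    forall_true_left]
  constructor
  · rintro ⟨h1, h2⟩ i
    have := h1 i; have := h2 i; omega
  · intro h
    constructor <;> intro i <;> have := h i <;> omega

lemma card_box (K : ℕ) : (box d K).card = (2 * K + 1) ^ d := by
  rw [box, Pi.card_Icc]
  simp only [Int.card_Icc]
  rw [Finset.prod_const, Finset.card_univ, Fintype.card_fin]
  congr 1
  omega

lemma card_le_of_znorm_le {R : ℝ} (hR : 1 ≤ R) (F : Finset (Fin d → ℤ))
    (hF : ∀ n ∈ F, znorm n ≤ R) : (F.card : ℝ) ≤ (3 * R) ^ d := by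
  have hsub : F ⊆ box d ⌊R⌋₊ := by
    intro n hn
    refine mem_box.2 (Nat.le_floor ?_)
    exact le_trans (fsup_le_znorm n) (hF n hn)
  calc (F.card : ℝ) ≤ ((box d ⌊R⌋₊).card : ℝ) := by
        exact_mod_cast Finset.card_le_card hsub
    _ = (((2 * ⌊R⌋₊ + 1) ^ d : ℕ) : ℝ) := by rw [card_box]
    _ ≤ (3 * R) ^ d := by
        push_cast
        apply pow_le_pow_left₀ (by positivity)
        have := Nat.floor_le (le_trans zero_le_one hR : (0:ℝ) ≤ R)
        linarith

/-- dyadic level -/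
def lg (n : Fin d → ℤ) : ℕ := Nat.log 2 (max (fsup n) 1)

lemma two_pow_lg_le (n : Fin d → ℤ) : ((2:ℝ) ^ lg n) ≤ znorm n := by
  rw [znorm_eq_cast]
  exact_mod_cast Nat.pow_log_le_self 2 (x := max (fsup n) 1) (by omega)

lemma znorm_lt_two_pow (n : Fin d → ℤ) : znorm n < (2:ℝ) ^ (lg n + 1) := by
  rw [znorm_eq_cast]
  exact_mod_cast Nat.lt_pow_succ_log_self (by norm_num) (max (fsup n) 1)

lemma mem_box_of_lg (n : Fin d → ℤ) : n ∈ box d (2 ^ (lg n + 1)) := by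
  rw [mem_box]
  have h := Nat.lt_pow_succ_log_self (b := 2) (by norm_num) (max (fsup n) 1)
  have : fsup n ≤ max (fsup n) 1 := le_max_left _ _
  unfold lg
  omega

lemma rpow_pow (x : ℝ) (hx : 0 ≤ x) (t : ℝ) (J : ℕ) : (x ^ t) ^ J = (x ^ (J:ℕ)) ^ t := by
  rw [← Real.rpow_natCast (x ^ t) J, ← Real.rpow_mul hx, mul_comm,
    Real.rpow_mul hx, Real.rpow_natCast]

lemma sum_znorm_rpow_le (s : ℝ) (hs : 0 ≤ s) (F : Finset (Fin d → ℤ)) :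
    ∑ n ∈ F, znorm n ^ (-s) ≤
      ∑ j ∈ F.image lg, (2:ℝ) ^ (3 * d) * ((2:ℝ) ^ ((d:ℝ) - s)) ^ j := by
  rw [← Finset.sum_fiberwise_of_maps_to (g := lg)
    (fun n hn => Finset.mem_image_of_mem lg hn) (fun n => znorm n ^ (-s))]
  refine Finset.sum_le_sum fun j hj => ?_
  have hterm : ∀ n ∈ F.filter (fun n => lg n = j), znorm n ^ (-s) ≤ ((2:ℝ) ^ j) ^ (-s) := by
    intro n hn
    have hl : lg n = j := (Finset.mem_filter.1 hn).2
    exact Real.rpow_le_rpow_of_nonpos (by positivity) (hl ▸ two_pow_lg_le n)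
      (neg_nonpos.2 hs)
  have hcard : ((F.filter (fun n => lg n = j)).card : ℝ) ≤ (2:ℝ) ^ (3 * d + j * d) := by
    have h1 : (F.filter (fun n => lg n = j)).card ≤ (2 * 2 ^ (j + 1) + 1) ^ d := by
      rw [← card_box]
      refine Finset.card_le_card fun n hn => ?_
      have hl : lg n = j := (Finset.mem_filter.1 hn).2
      have := mem_box_of_lg n
      rwa [hl] at this
    have h2 : ((2 * 2 ^ (j + 1) + 1) ^ d : ℕ) ≤ (2 ^ (j + 3)) ^ d := by
      apply Nat.pow_le_pow_left
      have : (1:ℕ) ≤ 2 ^ (j + 1) := Nat.one_le_two_pow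
      calc 2 * 2 ^ (j+1) + 1 ≤ 4 * 2^(j+1) := by omega
        _ = 2 ^ (j + 3) := by ring
    calc ((F.filter (fun n => lg n = j)).card : ℝ) ≤ (((2 ^ (j + 3)) ^ d : ℕ) : ℝ) := by
          exact_mod_cast le_trans h1 h2
      _ = (2:ℝ) ^ (3 * d + j * d) := by push_cast; rw [← pow_mul]; ring_nf
  calc ∑ n ∈ F.filter (fun n => lg n = j), znorm n ^ (-s)
      ≤ (F.filter (fun n => lg n = j)).card • (((2:ℝ) ^ j) ^ (-s)) :=
        Finset.sum_le_card_nsmul _ _ _ hterm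
    _ = ((F.filter (fun n => lg n = j)).card : ℝ) * ((2:ℝ) ^ j) ^ (-s) := nsmul_eq_mul _ _
    _ ≤ (2:ℝ) ^ (3 * d + j * d) * ((2:ℝ) ^ j) ^ (-s) :=
        mul_le_mul_of_nonneg_right hcard (by positivity)
    _ = (2:ℝ) ^ (3 * d) * ((2:ℝ) ^ ((d:ℝ) - s)) ^ j := by
        rw [← Real.rpow_natCast (2:ℝ) (3*d + j*d), ← Real.rpow_natCast (2:ℝ) (3*d),
          ← Real.rpow_natCast (2:ℝ) j, ← Real.rpow_natCast ((2:ℝ) ^ ((d:ℝ) - s)) j,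
          ← Real.rpow_mul (by norm_num : (0:ℝ) ≤ 2),
          ← Real.rpow_mul (by norm_num : (0:ℝ) ≤ 2),
          ← Real.rpow_add two_pos, ← Real.rpow_add two_pos]
        congr 1
        push_cast
        ring

lemma ball_sum (s : ℝ) (hs0 : 0 ≤ s) (hsd : s < d) :
    ∃ C : ℝ, 0 < C ∧ ∀ R : ℝ, 1 ≤ R → ∀ F : Finset (Fin d → ℤ),
      (∀ n ∈ F, znorm n ≤ R) → ∑ n ∈ F, znorm n ^ (-s) ≤ C * R ^ ((d:ℝ) - s) := by
  set q : ℝ := (2:ℝ) ^ ((d:ℝ) - s) with hq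
  have hq1 : 1 < q := by
    rw [hq]
    apply Real.one_lt_rpow_iff_of_pos two_pos |>.2
    exact Or.inl ⟨one_lt_two, by linarith⟩
  have hCpos : (0:ℝ) < 2 ^ (3 * d) * (q / (q - 1)) :=
    mul_pos (by positivity) (div_pos (by linarith) (by linarith))
  refine ⟨2 ^ (3 * d) * (q / (q - 1)), hCpos, fun R hR F hF => ?_⟩
  set J := Nat.log 2 ⌊R⌋₊ with hJ
  have hfl : (1:ℕ) ≤ ⌊R⌋₊ := Nat.le_floor (by exact_mod_cast hR)
  have himage : F.image lg ⊆ Finset.range (J + 1) := by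
    intro j hj
    obtain ⟨n, hn, rfl⟩ := Finset.mem_image.1 hj
    have h1 : ((2:ℝ) ^ lg n) ≤ R := le_trans (two_pow_lg_le n) (hF n hn)
    have h2 : (2:ℕ) ^ lg n ≤ ⌊R⌋₊ := Nat.le_floor (by exact_mod_cast h1)
    have h3 := (Nat.le_log_iff_pow_le one_lt_two (by omega)).2 h2
    exact Finset.mem_range.2 (Nat.lt_succ_of_le h3)
  have hqJ : q ^ J ≤ R ^ ((d:ℝ) - s) := by
    rw [hq, rpow_pow 2 (by norm_num) _ J]
    apply Real.rpow_le_rpow (by positivity) _ (by linarith)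
    calc ((2:ℝ) ^ (J:ℕ)) = (((2:ℕ) ^ (J:ℕ) : ℕ) : ℝ) := by push_cast; ring
      _ ≤ (⌊R⌋₊ : ℝ) := by exact_mod_cast Nat.pow_log_le_self 2 (by omega)
      _ ≤ R := Nat.floor_le (by linarith)
  calc ∑ n ∈ F, znorm n ^ (-s)
      ≤ ∑ j ∈ F.image lg, (2:ℝ) ^ (3 * d) * q ^ j := sum_znorm_rpow_le s hs0 F
    _ ≤ ∑ j ∈ Finset.range (J + 1), (2:ℝ) ^ (3 * d) * q ^ j :=
        Finset.sum_le_sum_of_subset_of_nonneg himage (fun j _ _ => by positivity)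
    _ = 2 ^ (3 * d) * ∑ j ∈ Finset.range (J + 1), q ^ j := by rw [Finset.mul_sum]
    _ ≤ 2 ^ (3 * d) * (q ^ (J + 1) / (q - 1)) := by
        apply mul_le_mul_of_nonneg_left _ (by positivity)
        have h0 : (0:ℝ) < q - 1 := by linarith
        rw [geom_sum_eq hq1.ne']
        exact (div_le_div_iff_of_pos_right h0).2 (by linarith)
    _ ≤ 2 ^ (3 * d) * (q / (q - 1)) * R ^ ((d:ℝ) - s) := by
        have h0 : (0:ℝ) < q - 1 := by linarith
        have key : q ^ (J + 1) / (q - 1) ≤ q / (q - 1) * R ^ ((d:ℝ) - s) := by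
          have h1 : q ^ (J+1) ≤ q * R ^ ((d:ℝ) - s) := by
            rw [pow_succ']
            exact mul_le_mul_of_nonneg_left hqJ (by linarith)
          calc q ^ (J+1) / (q - 1) ≤ (q * R ^ ((d:ℝ) - s)) / (q - 1) :=
                (div_le_div_iff_of_pos_right h0).2 h1
            _ = q / (q - 1) * R ^ ((d:ℝ) - s) := by ring
        calc (2:ℝ) ^ (3*d) * (q ^ (J + 1) / (q - 1)) ≤
            2 ^ (3*d) * (q / (q - 1) * R ^ ((d:ℝ) - s)) :=
              mul_le_mul_of_nonneg_left key (by positivity)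
          _ = _ := by ring

lemma tail_sum (s : ℝ) (hds : (d:ℝ) < s) :
    ∃ C : ℝ, 0 < C ∧ ∀ R : ℝ, 1 ≤ R → ∀ F : Finset (Fin d → ℤ),
      (∀ n ∈ F, R ≤ znorm n) → ∑ n ∈ F, znorm n ^ (-s) ≤ C * R ^ ((d:ℝ) - s) := by
  set q : ℝ := (2:ℝ) ^ ((d:ℝ) - s) with hq
  have hq0 : 0 < q := Real.rpow_pos_of_pos two_pos _
  have hq1 : q < 1 := by
    rw [hq]
    exact Real.rpow_lt_one_of_one_lt_of_neg one_lt_two (by linarith)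
  have h1q : (0:ℝ) < 1 - q := by linarith
  have hCpos : (0:ℝ) < 2 ^ (3 * d) * ((1 - q)⁻¹ * (2:ℝ) ^ (s - (d:ℝ))) := by positivity
  refine ⟨_, hCpos, fun R hR F hF => ?_⟩
  have hR0 : (0:ℝ) < R := by linarith
  set J := Nat.log 2 ⌊R⌋₊ with hJ
  have hfl : (1:ℕ) ≤ ⌊R⌋₊ := Nat.le_floor (by exact_mod_cast hR)
  have hlow : ∀ j ∈ F.image lg, J ≤ j := by
    intro j hj
    obtain ⟨n, hn, rfl⟩ := Finset.mem_image.1 hj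
    have h1 : R < (2:ℝ) ^ (lg n + 1) := lt_of_le_of_lt (hF n hn) (znorm_lt_two_pow n)
    have h2 : ⌊R⌋₊ < (2:ℕ) ^ (lg n + 1) := by
      have : ((⌊R⌋₊:ℕ):ℝ) ≤ R := Nat.floor_le hR0.le
      have h3 : ((⌊R⌋₊:ℕ):ℝ) < (((2:ℕ) ^ (lg n + 1) : ℕ) : ℝ) := by push_cast; linarith
      exact_mod_cast h3
    have := Nat.log_lt_of_lt_pow (by omega) h2
    omega
  have hgeom : ∑ j ∈ F.image lg, q ^ j ≤ q ^ J * (1 - q)⁻¹ := by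
    rcases (F.image lg).eq_empty_or_nonempty with he | hne
    · rw [he]; simp; positivity
    · set N := (F.image lg).max' hne with hN
      have hsub : F.image lg ⊆ Finset.Ico J (N + 1) := by
        intro j hj
        rw [Finset.mem_Ico]
        exact ⟨hlow j hj, Nat.lt_succ_of_le (Finset.le_max' _ j hj)⟩
      have hJN : J ≤ N := hlow N ((F.image lg).max'_mem hne)
      calc ∑ j ∈ F.image lg, q ^ j ≤ ∑ j ∈ Finset.Ico J (N + 1), q ^ j :=
            Finset.sum_le_sum_of_subset_of_nonneg hsub (fun j _ _ => by positivity)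
        _ = ∑ i ∈ Finset.range (N + 1 - J), q ^ (J + i) := by
            rw [Finset.sum_Ico_eq_sum_range]
        _ = q ^ J * ∑ i ∈ Finset.range (N + 1 - J), q ^ i := by
            rw [Finset.mul_sum]
            exact Finset.sum_congr rfl fun i _ => by rw [pow_add]
        _ ≤ q ^ J * (1 - q)⁻¹ := by
            apply mul_le_mul_of_nonneg_left _ (by positivity)
            have hsummable := summable_geometric_of_lt_one hq0.le hq1
            calc ∑ i ∈ Finset.range (N + 1 - J), q ^ i ≤ ∑' i : ℕ, q ^ i :=
                  Summable.sum_le_tsum _ (fun i _ => by positivity) hsummable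
              _ = (1 - q)⁻¹ := tsum_geometric_of_lt_one hq0.le hq1
  have hqJ : q ^ J ≤ R ^ ((d:ℝ) - s) * (2:ℝ) ^ (s - (d:ℝ)) := by
    have h2J : R / 2 ≤ (2:ℝ) ^ (J:ℕ) := by
      have h1 : ⌊R⌋₊ < (2:ℕ) ^ (J + 1) := Nat.lt_pow_succ_log_self (by norm_num) _
      have h2 : R < (((2:ℕ) ^ (J + 1) : ℕ) : ℝ) := by
        have : R < (⌊R⌋₊:ℝ) + 1 := Nat.lt_floor_add_one R
        have h3 : ((⌊R⌋₊:ℕ):ℝ) + 1 ≤ (((2:ℕ) ^ (J+1) : ℕ):ℝ) := by exact_mod_cast h1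
        linarith
      rw [div_le_iff₀ (by norm_num : (0:ℝ) < 2)]
      refine le_of_lt ?_
      calc R < (((2:ℕ) ^ (J+1) : ℕ):ℝ) := h2
        _ = (2:ℝ) ^ (J:ℕ) * 2 := by push_cast; ring
    calc q ^ J = ((2:ℝ) ^ (J:ℕ)) ^ ((d:ℝ) - s) := by rw [hq, rpow_pow 2 (by norm_num)]
      _ ≤ (R / 2) ^ ((d:ℝ) - s) := by
          apply Real.rpow_le_rpow_of_nonpos (by positivity) h2J (by linarith)
      _ = R ^ ((d:ℝ) - s) * (2:ℝ) ^ (s - (d:ℝ)) := by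
          rw [Real.div_rpow hR0.le (by norm_num : (0:ℝ) ≤ 2)]
          rw [div_eq_mul_inv, ← Real.rpow_neg (by norm_num : (0:ℝ) ≤ 2)]
          ring_nf
  calc ∑ n ∈ F, znorm n ^ (-s)
      ≤ ∑ j ∈ F.image lg, (2:ℝ) ^ (3 * d) * q ^ j := sum_znorm_rpow_le s (le_trans (Nat.cast_nonneg d) hds.le) F
    _ = 2 ^ (3 * d) * ∑ j ∈ F.image lg, q ^ j := by rw [Finset.mul_sum]
    _ ≤ 2 ^ (3 * d) * (q ^ J * (1 - q)⁻¹) := mul_le_mul_of_nonneg_left hgeom (by positivity)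
    _ ≤ 2 ^ (3 * d) * ((1 - q)⁻¹ * (2:ℝ) ^ (s - (d:ℝ))) * R ^ ((d:ℝ) - s) := by
        have := mul_le_mul_of_nonneg_right hqJ (le_of_lt (inv_pos.2 h1q))
        calc (2:ℝ) ^ (3*d) * (q ^ J * (1 - q)⁻¹)
            ≤ 2 ^ (3*d) * (R ^ ((d:ℝ) - s) * (2:ℝ) ^ (s - (d:ℝ)) * (1 - q)⁻¹) :=
              mul_le_mul_of_nonneg_left this (by positivity)
          _ = _ := by ring

lemma glob (hd : 1 ≤ d) (s : ℝ) (hds : (d:ℝ) < s) :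
    Summable (fun n : Fin d → ℤ => znorm n ^ (-s)) ∧
    ∃ C : ℝ, 0 < C ∧ ∀ F : Finset (Fin d → ℤ), ∑ n ∈ F, znorm n ^ (-s) ≤ C := by
  obtain ⟨C, hC, h⟩ := tail_sum s hds
  have h1 : ∀ F : Finset (Fin d → ℤ), ∑ n ∈ F, znorm n ^ (-s) ≤ C := by
    intro F
    have := h 1 le_rfl F (fun n _ => one_le_znorm n)
    simpa [Real.one_rpow] using this
  refine ⟨summable_of_sum_le (fun n => Real.rpow_nonneg (znorm_pos n).le _) h1, C, hC, h1⟩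

lemma ballA (hd : 1 ≤ d) (a b : ℝ) (ha : 0 < a) (hb : 0 < b)
    (hab : (d:ℝ) < a + b) (hmax : max a b ≠ (d:ℝ)) :
    ∃ C : ℝ, 0 < C ∧ ∀ M : ℝ, 1 ≤ M → ∀ F : Finset (Fin d → ℤ),
      (∀ n ∈ F, znorm n ≤ M) →
      ∑ n ∈ F, znorm n ^ (-a) ≤ C * M ^ (b - min a (min b (a + b - d))) := by
  set r := min a (min b (a + b - d)) with hr
  have hra : r ≤ a := min_le_left _ _
  have hrb : r ≤ b := le_trans (min_le_right _ _) (min_le_left _ _)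
  have hrab : r ≤ a + b - d := le_trans (min_le_right _ _) (min_le_right _ _)
  rcases lt_trichotomy a (d:ℝ) with hlt | heq | hgt
  · obtain ⟨C, hC, h⟩ := ball_sum a ha.le hlt
    refine ⟨C, hC, fun M hM F hF => ?_⟩
    calc ∑ n ∈ F, znorm n ^ (-a) ≤ C * M ^ ((d:ℝ) - a) := h M hM F hF
      _ ≤ C * M ^ (b - r) := mul_le_mul_of_nonneg_left
          (Real.rpow_le_rpow_of_exponent_le hM (by linarith)) hC.le
  · have hbd : (d:ℝ) < b := by
      rcases le_or_gt b (d:ℝ) with hle | h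
      · exfalso
        apply hmax
        rw [max_eq_left (by linarith : b ≤ a), heq]
      · exact h
    obtain ⟨_, C, hC, h⟩ := glob hd b hbd
    refine ⟨C, hC, fun M hM F hF => ?_⟩
    have hM0 : (0:ℝ) < M := by linarith
    have hpt : ∀ n ∈ F, znorm n ^ (-a) ≤ M ^ (b - a) * znorm n ^ (-b) := by
      intro n hn
      have h1 : znorm n ^ (-a) = znorm n ^ (b - a) * znorm n ^ (-b) := by
        rw [← Real.rpow_add (znorm_pos n)]; ring_nf
      rw [h1]
      apply mul_le_mul_of_nonneg_right _ (Real.rpow_nonneg (znorm_pos n).le _)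
      exact Real.rpow_le_rpow (znorm_pos n).le (hF n hn) (by linarith)
    calc ∑ n ∈ F, znorm n ^ (-a) ≤ ∑ n ∈ F, M ^ (b - a) * znorm n ^ (-b) :=
          Finset.sum_le_sum hpt
      _ = M ^ (b - a) * ∑ n ∈ F, znorm n ^ (-b) := by rw [Finset.mul_sum]
      _ ≤ M ^ (b - a) * C :=
          mul_le_mul_of_nonneg_left (h F) (Real.rpow_nonneg hM0.le _)
      _ ≤ C * M ^ (b - r) := by
          rw [mul_comm]
          exact mul_le_mul_of_nonneg_left
            (Real.rpow_le_rpow_of_exponent_le hM (by linarith)) hC.le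
  · obtain ⟨_, C, hC, h⟩ := glob hd a hgt
    refine ⟨C, hC, fun M hM F hF => ?_⟩
    calc ∑ n ∈ F, znorm n ^ (-a) ≤ C := h F
      _ = C * 1 := (mul_one C).symm
      _ ≤ C * M ^ (b - r) := mul_le_mul_of_nonneg_left
          (by rw [← Real.rpow_zero M]
              exact Real.rpow_le_rpow_of_exponent_le hM (by linarith)) hC.le

end ZN

theorem stmt0 (d : ℕ) (hd : 1 ≤ d) (a b : ℝ) (ha : 0 < a) (hb : 0 < b)
    (hab : (d : ℝ) < a + b) (hmax : max a b ≠ (d : ℝ)) :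
    ∃ C : ℝ, 0 < C ∧ ∀ m : Fin d → ℤ,
      (Summable fun n₁ : Fin d → ℤ => 1 / (znorm n₁ ^ a * znorm (m - n₁) ^ b)) ∧
      ∑' n₁ : Fin d → ℤ, 1 / (znorm n₁ ^ a * znorm (m - n₁) ^ b)
        ≤ C / znorm m ^ min a (min b (a + b - d)) := by
  classical
  set r := min a (min b (a + b - d)) with hrdef
  have hd0 : (1:ℝ) ≤ (d:ℝ) := by exact_mod_cast hd
  have hra : r ≤ a := min_le_left _ _
  have hrb : r ≤ b := le_trans (min_le_right _ _) (min_le_left _ _)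
  have hrab : r ≤ a + b - d := le_trans (min_le_right _ _) (min_le_right _ _)
  obtain ⟨CA, hCA, hA0⟩ := ZN.ballA hd a b ha hb hab hmax
  have hmax' : max b a ≠ (d:ℝ) := by rwa [max_comm]
  obtain ⟨CB, hCB, hB0⟩ := ZN.ballA hd b a hb ha (by linarith) hmax'
  obtain ⟨hsum_ab, Cg, hCg, hG0⟩ := ZN.glob hd (a + b) (by linarith)
  obtain ⟨CT, hCT, hT0⟩ := ZN.tail_sum (d := d) (a + b) (by linarith)
  have hrsymm : min b (min a (b + a - d)) = r := by
    rw [hrdef, add_comm b a, min_left_comm]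
  have h2b : (0:ℝ) < 2 ^ b := Real.rpow_pos_of_pos two_pos b
  have h2a : (0:ℝ) < 2 ^ a := Real.rpow_pos_of_pos two_pos a
  have h6d : (0:ℝ) < 6 ^ d := pow_pos (by norm_num) d
  have h2dab : (0:ℝ) < 2 ^ ((d:ℝ) - (a + b)) := Real.rpow_pos_of_pos two_pos _
  set C : ℝ := 2 ^ b * CA + 2 ^ a * CB + 6 ^ d * (2 ^ a * 2 ^ b)
      + 2 ^ b * CT * 2 ^ ((d:ℝ) - (a + b)) with hCdef
  have hCpos : 0 < C := by
    have h1 : 0 < 2 ^ b * CA := mul_pos h2b hCA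
    have h2 : 0 < 2 ^ a * CB := mul_pos h2a hCB
    have h3 : (0:ℝ) < 6 ^ d * (2 ^ a * 2 ^ b) := mul_pos h6d (mul_pos h2a h2b)
    have h4 : 0 < 2 ^ b * CT * 2 ^ ((d:ℝ) - (a + b)) := mul_pos (mul_pos h2b hCT) h2dab
    rw [hCdef]; linarith
  refine ⟨C, hCpos, fun m => ?_⟩
  set M := znorm m with hMdef
  have hM1 : 1 ≤ M := ZN.one_le_znorm m
  have hM0 : (0:ℝ) < M := by linarith
  set g : (Fin d → ℤ) → ℝ := fun n => znorm n ^ (-a) * znorm (m - n) ^ (-b) with hg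
  have geq : ∀ n : Fin d → ℤ, 1 / (znorm n ^ a * znorm (m - n) ^ b) = g n := by
    intro n
    show 1 / (znorm n ^ a * znorm (m - n) ^ b) = znorm n ^ (-a) * znorm (m - n) ^ (-b)
    rw [Real.rpow_neg (ZN.znorm_pos n).le, Real.rpow_neg (ZN.znorm_pos (m - n)).le,
      one_div, mul_inv]
  have hgnonneg : ∀ n, 0 ≤ g n := fun n =>
    mul_nonneg (Real.rpow_nonneg (ZN.znorm_pos n).le _)
      (Real.rpow_nonneg (ZN.znorm_pos (m - n)).le _)
  have hMadd : ∀ u v : ℝ, M ^ u * M ^ v = M ^ (u + v) :=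
    fun u v => (Real.rpow_add hM0 u v).symm
  have hdiv2 : ∀ (x t : ℝ), 0 < x → (x / 2) ^ (-t) = 2 ^ t * x ^ (-t) := by
    intro x t hx
    have h2 : (2:ℝ) ^ (-t) = ((2:ℝ) ^ t)⁻¹ := Real.rpow_neg (by norm_num) t
    rw [Real.div_rpow hx.le (by norm_num : (0:ℝ) ≤ 2), h2, div_eq_mul_inv, inv_inv, mul_comm]
  have tri1 : ∀ n : Fin d → ℤ, M ≤ znorm (m - n) + znorm n := fun n => ZN.znorm_tri m n
  have tri2 : ∀ n : Fin d → ℤ, znorm n ≤ znorm (m - n) + M := by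
    intro n
    calc znorm n ≤ znorm (n - m) + znorm m := ZN.znorm_tri n m
      _ = znorm (m - n) + M := by rw [ZN.znorm_sub_rev]
  have hptglob : ∀ n, g n ≤ (2 * M) ^ b * znorm n ^ (-(a + b)) := by
    intro n
    have hzn := ZN.znorm_pos n
    have hzmn := ZN.znorm_pos (m - n)
    have h1 : znorm (m - n) ≤ M * znorm (m - n) :=
      le_mul_of_one_le_left hzmn.le hM1
    have h2 : M ≤ M * znorm (m - n) :=
      le_mul_of_one_le_right hM0.le (ZN.one_le_znorm _)
    have h3 : znorm n / (2 * M) ≤ znorm (m - n) := by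
      rw [div_le_iff₀ (by linarith : (0:ℝ) < 2 * M)]
      nlinarith [tri2 n]
    have h4 : znorm (m - n) ^ (-b) ≤ (znorm n / (2 * M)) ^ (-b) :=
      Real.rpow_le_rpow_of_nonpos (div_pos hzn (by linarith)) h3 (by linarith)
    have h5 : (znorm n / (2 * M)) ^ (-b) = (2 * M) ^ b * znorm n ^ (-b) := by
      have hinv : (2 * M : ℝ) ^ (-b) = ((2 * M : ℝ) ^ b)⁻¹ :=
        Real.rpow_neg (by linarith) b
      rw [Real.div_rpow hzn.le (by linarith : (0:ℝ) ≤ 2 * M), hinv, div_eq_mul_inv,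
        inv_inv, mul_comm]
    calc g n ≤ znorm n ^ (-a) * ((2 * M) ^ b * znorm n ^ (-b)) := by
          rw [← h5]
          exact mul_le_mul_of_nonneg_left h4 (Real.rpow_nonneg hzn.le _)
      _ = (2 * M) ^ b * (znorm n ^ (-a) * znorm n ^ (-b)) := by ring
      _ = (2 * M) ^ b * znorm n ^ (-(a + b)) := by
          rw [← Real.rpow_add hzn]; ring_nf
  have hgsummable : Summable g :=
    Summable.of_nonneg_of_le hgnonneg hptglob (hsum_ab.mul_left _)
  have hsummable : Summable fun n : Fin d → ℤ => 1 / (znorm n ^ a * znorm (m - n) ^ b) :=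
    hgsummable.congr fun n => (geq n).symm
  refine ⟨hsummable, ?_⟩
  have htsum : (∑' n : Fin d → ℤ, 1 / (znorm n ^ a * znorm (m - n) ^ b)) = ∑' n, g n :=
    tsum_congr geq
  rw [htsum]
  have hgoal : ∀ u : Finset (Fin d → ℤ), ∑ n ∈ u, g n ≤ C * M ^ (-r) := by
    intro u
    set p1 : (Fin d → ℤ) → Prop := fun n => znorm n ≤ M / 2 with hp1
    set p2 : (Fin d → ℤ) → Prop := fun n => znorm (m - n) ≤ M / 2 with hp2
    set p3 : (Fin d → ℤ) → Prop := fun n => znorm n ≤ 2 * M with hp3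
    set u1 := u.filter p1 with hu1
    set v1 := u.filter (fun n => ¬ p1 n) with hv1
    set u2 := v1.filter p2 with hu2
    set v2 := v1.filter (fun n => ¬ p2 n) with hv2
    set u3 := v2.filter p3 with hu3
    set v3 := v2.filter (fun n => ¬ p3 n) with hv3
    -- Region A
    have hregA : ∑ n ∈ u1, g n ≤ 2 ^ b * CA * M ^ (-r) := by
      have hpt : ∀ n ∈ u1, g n ≤ (M / 2) ^ (-b) * znorm n ^ (-a) := by
        intro n hn
        have hle : znorm n ≤ M / 2 := (Finset.mem_filter.1 hn).2
        have h1 : M / 2 ≤ znorm (m - n) := by have := tri1 n; linarith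
        have h2 : znorm (m - n) ^ (-b) ≤ (M / 2) ^ (-b) :=
          Real.rpow_le_rpow_of_nonpos (by linarith) h1 (by linarith)
        calc g n = znorm n ^ (-a) * znorm (m - n) ^ (-b) := rfl
          _ ≤ znorm n ^ (-a) * (M / 2) ^ (-b) :=
              mul_le_mul_of_nonneg_left h2 (Real.rpow_nonneg (ZN.znorm_pos n).le _)
          _ = (M / 2) ^ (-b) * znorm n ^ (-a) := by ring
      have hsum1 : ∑ n ∈ u1, znorm n ^ (-a) ≤ CA * M ^ (b - r) :=
        hA0 M hM1 u1 (fun n hn => by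
          have hle : znorm n ≤ M / 2 := (Finset.mem_filter.1 hn).2
          linarith)
      calc ∑ n ∈ u1, g n ≤ ∑ n ∈ u1, (M / 2) ^ (-b) * znorm n ^ (-a) :=
            Finset.sum_le_sum hpt
        _ = (M / 2) ^ (-b) * ∑ n ∈ u1, znorm n ^ (-a) := by rw [Finset.mul_sum]
        _ ≤ (M / 2) ^ (-b) * (CA * M ^ (b - r)) :=
            mul_le_mul_of_nonneg_left hsum1 (Real.rpow_nonneg (by linarith) _)
        _ = 2 ^ b * CA * (M ^ (-b) * M ^ (b - r)) := by rw [hdiv2 M b hM0]; ring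
        _ = 2 ^ b * CA * M ^ (-r) := by
            rw [hMadd, show -b + (b - r) = -r from by ring]
    -- Region B
    have hregB : ∑ n ∈ u2, g n ≤ 2 ^ a * CB * M ^ (-r) := by
      have hpt : ∀ n ∈ u2, g n ≤ (M / 2) ^ (-a) * znorm (m - n) ^ (-b) := by
        intro n hn
        have hmem := Finset.mem_filter.1 hn
        have hgt : ¬ (znorm n ≤ M / 2) := (Finset.mem_filter.1 hmem.1).2
        have h1 : M / 2 ≤ znorm n := le_of_lt (not_le.1 hgt)
        have h2 : znorm n ^ (-a) ≤ (M / 2) ^ (-a) :=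
          Real.rpow_le_rpow_of_nonpos (by linarith) h1 (by linarith)
        exact mul_le_mul_of_nonneg_right h2 (Real.rpow_nonneg (ZN.znorm_pos (m - n)).le _)
      have hsum2 : ∑ n ∈ u2, znorm (m - n) ^ (-b) ≤ CB * M ^ (a - r) := by
        have hinj : ∀ x ∈ u2, ∀ y ∈ u2, m - x = m - y → x = y := by
          intro x _ y _ h
          exact sub_right_injective h
        calc ∑ n ∈ u2, znorm (m - n) ^ (-b)
            = ∑ k ∈ u2.image (fun n => m - n), znorm k ^ (-b) :=
              (Finset.sum_image (f := fun k => znorm k ^ (-b)) (g := fun n => m - n) hinj).symm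
          _ ≤ CB * M ^ (a - min b (min a (b + a - d))) := by
              apply hB0 M hM1
              intro k hk
              obtain ⟨n, hn, rfl⟩ := Finset.mem_image.1 hk
              have hle : znorm (m - n) ≤ M / 2 := (Finset.mem_filter.1 hn).2
              linarith
          _ = CB * M ^ (a - r) := by rw [hrsymm]
      calc ∑ n ∈ u2, g n ≤ ∑ n ∈ u2, (M / 2) ^ (-a) * znorm (m - n) ^ (-b) :=
            Finset.sum_le_sum hpt
        _ = (M / 2) ^ (-a) * ∑ n ∈ u2, znorm (m - n) ^ (-b) := by rw [Finset.mul_sum]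
        _ ≤ (M / 2) ^ (-a) * (CB * M ^ (a - r)) :=
            mul_le_mul_of_nonneg_left hsum2 (Real.rpow_nonneg (by linarith) _)
        _ = 2 ^ a * CB * (M ^ (-a) * M ^ (a - r)) := by rw [hdiv2 M a hM0]; ring
        _ = 2 ^ a * CB * M ^ (-r) := by
            rw [hMadd, show -a + (a - r) = -r from by ring]
    -- Region C
    have hregC : ∑ n ∈ u3, g n ≤ 6 ^ d * (2 ^ a * 2 ^ b) * M ^ (-r) := by
      have hpt : ∀ n ∈ u3, g n ≤ (M / 2) ^ (-a) * (M / 2) ^ (-b) := by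
        intro n hn
        have hmem := Finset.mem_filter.1 hn
        have hmem2 := Finset.mem_filter.1 hmem.1
        have hn1 : ¬ (znorm n ≤ M / 2) := (Finset.mem_filter.1 hmem2.1).2
        have hn2 : ¬ (znorm (m - n) ≤ M / 2) := hmem2.2
        have h1 : M / 2 ≤ znorm n := le_of_lt (not_le.1 hn1)
        have h2 : M / 2 ≤ znorm (m - n) := le_of_lt (not_le.1 hn2)
        have h3 : znorm n ^ (-a) ≤ (M / 2) ^ (-a) :=
          Real.rpow_le_rpow_of_nonpos (by linarith) h1 (by linarith)
        have h4 : znorm (m - n) ^ (-b) ≤ (M / 2) ^ (-b) :=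
          Real.rpow_le_rpow_of_nonpos (by linarith) h2 (by linarith)
        exact mul_le_mul h3 h4 (Real.rpow_nonneg (ZN.znorm_pos (m - n)).le _)
          (Real.rpow_nonneg (by linarith) _)
      have hcard : ((u3.card : ℕ) : ℝ) ≤ (3 * (2 * M)) ^ d := by
        apply ZN.card_le_of_znorm_le (by linarith) u3
        intro n hn
        exact (Finset.mem_filter.1 hn).2
      calc ∑ n ∈ u3, g n ≤ u3.card • ((M / 2) ^ (-a) * (M / 2) ^ (-b)) :=
            Finset.sum_le_card_nsmul _ _ _ hpt
        _ = (u3.card : ℝ) * ((M / 2) ^ (-a) * (M / 2) ^ (-b)) := nsmul_eq_mul _ _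
        _ ≤ (3 * (2 * M)) ^ d * ((M / 2) ^ (-a) * (M / 2) ^ (-b)) :=
            mul_le_mul_of_nonneg_right hcard
              (mul_nonneg (Real.rpow_nonneg (by linarith) _) (Real.rpow_nonneg (by linarith) _))
        _ = 6 ^ d * (2 ^ a * 2 ^ b) * (M ^ ((d:ℕ):ℝ) * (M ^ (-a) * M ^ (-b))) := by
            rw [hdiv2 M a hM0, hdiv2 M b hM0]
            rw [show (3 * (2 * M)) ^ d = 6 ^ d * M ^ (d:ℕ) from by rw [← mul_pow]; congr 1; ring]
            rw [← Real.rpow_natCast M d]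
            ring
        _ ≤ 6 ^ d * (2 ^ a * 2 ^ b) * M ^ (-r) := by
            apply mul_le_mul_of_nonneg_left _ (le_of_lt (mul_pos h6d (mul_pos h2a h2b)))
            rw [hMadd, hMadd]
            exact Real.rpow_le_rpow_of_exponent_le hM1 (by push_cast; linarith)
    -- Region D
    have hregD : ∑ n ∈ v3, g n ≤ 2 ^ b * CT * 2 ^ ((d:ℝ) - (a + b)) * M ^ (-r) := by
      have hpt : ∀ n ∈ v3, g n ≤ 2 ^ b * znorm n ^ (-(a + b)) := by
        intro n hn
        have h2M : ¬ (znorm n ≤ 2 * M) := (Finset.mem_filter.1 hn).2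
        have h2M' : 2 * M ≤ znorm n := le_of_lt (not_le.1 h2M)
        have hzn := ZN.znorm_pos n
        have h1 : znorm n / 2 ≤ znorm (m - n) := by
          have := tri2 n
          linarith
        have h2 : znorm (m - n) ^ (-b) ≤ (znorm n / 2) ^ (-b) :=
          Real.rpow_le_rpow_of_nonpos (by linarith) h1 (by linarith)
        calc g n ≤ znorm n ^ (-a) * (znorm n / 2) ^ (-b) :=
              mul_le_mul_of_nonneg_left h2 (Real.rpow_nonneg hzn.le _)
          _ = 2 ^ b * (znorm n ^ (-a) * znorm n ^ (-b)) := by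
              rw [hdiv2 (znorm n) b hzn]; ring
          _ = 2 ^ b * znorm n ^ (-(a + b)) := by
              rw [← Real.rpow_add hzn]
              ring_nf
      have hsumtail : ∑ n ∈ v3, znorm n ^ (-(a + b)) ≤ CT * (2 * M) ^ ((d:ℝ) - (a + b)) := by
        apply hT0 (2 * M) (by linarith)
        intro n hn
        exact le_of_lt (not_le.1 (Finset.mem_filter.1 hn).2)
      calc ∑ n ∈ v3, g n ≤ ∑ n ∈ v3, 2 ^ b * znorm n ^ (-(a + b)) :=
            Finset.sum_le_sum hpt
        _ = 2 ^ b * ∑ n ∈ v3, znorm n ^ (-(a + b)) := by rw [Finset.mul_sum]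
        _ ≤ 2 ^ b * (CT * (2 * M) ^ ((d:ℝ) - (a + b))) :=
            mul_le_mul_of_nonneg_left hsumtail h2b.le
        _ = 2 ^ b * CT * 2 ^ ((d:ℝ) - (a + b)) * M ^ ((d:ℝ) - (a + b)) := by
            rw [Real.mul_rpow (by norm_num : (0:ℝ) ≤ 2) hM0.le]
            ring
        _ ≤ 2 ^ b * CT * 2 ^ ((d:ℝ) - (a + b)) * M ^ (-r) := by
            apply mul_le_mul_of_nonneg_left _ (le_of_lt (mul_pos (mul_pos h2b hCT) h2dab))
            exact Real.rpow_le_rpow_of_exponent_le hM1 (by linarith)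
    calc ∑ n ∈ u, g n
        = ∑ n ∈ u1, g n + ∑ n ∈ v1, g n :=
          (Finset.sum_filter_add_sum_filter_not u p1 g).symm
      _ = ∑ n ∈ u1, g n + (∑ n ∈ u2, g n + ∑ n ∈ v2, g n) :=
          congrArg (fun t => ∑ n ∈ u1, g n + t)
            (Finset.sum_filter_add_sum_filter_not v1 p2 g).symm
      _ = ∑ n ∈ u1, g n + (∑ n ∈ u2, g n + (∑ n ∈ u3, g n + ∑ n ∈ v3, g n)) :=
          congrArg (fun t => ∑ n ∈ u1, g n + (∑ n ∈ u2, g n + t))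
            (Finset.sum_filter_add_sum_filter_not v2 p3 g).symm
      _ ≤ 2 ^ b * CA * M ^ (-r) + (2 ^ a * CB * M ^ (-r)
          + (6 ^ d * (2 ^ a * 2 ^ b) * M ^ (-r)
          + 2 ^ b * CT * 2 ^ ((d:ℝ) - (a + b)) * M ^ (-r))) :=
          add_le_add hregA (add_le_add hregB (add_le_add hregC hregD))
      _ = C * M ^ (-r) := by rw [hCdef]; ring
  calc (∑' n, g n) ≤ C * M ^ (-r) := Summable.tsum_le_of_sum_le hgsummable hgoal
    _ = C / M ^ r := by rw [Real.rpow_neg hM0.le, div_eq_mul_inv]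
end

section
/- Let m, s ∈ ℕ and let f(Y₁,…,Y_m) be a real-valued polynomial of degree at most s in independent identically distributed Bernoulli random variables Y₁,…,Y_m taking values in {±1} each with probability 1/2. Then E[f⁴] ≤ 9^s · (E[f²])². -/
open Finset

lemma pre1 (m : ℕ) (T : Finset (Fin m)) :
    (T.map (Fin.succEmb m)).preimage Fin.succ (Fin.succ_injective m).injOn = T := by
  ext j; simp [Finset.mem_preimage, Fin.succEmb]

lemma pre2 (m : ℕ) (T : Finset (Fin m)) :
    (insert 0 (T.map (Fin.succEmb m))).preimage Fin.succ (Fin.succ_injective m).injOn = T := by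
  ext j; simp [Finset.mem_preimage, Fin.succEmb, Fin.succ_ne_zero]

lemma zero_not_mem_map (m : ℕ) (T : Finset (Fin m)) :
    (0 : Fin (m+1)) ∉ T.map (Fin.succEmb m) := by
  intro h
  obtain ⟨x, -, hx⟩ := Finset.mem_map.1 h
  exact Fin.succ_ne_zero x hx

noncomputable def fsEquiv (m : ℕ) : Finset (Fin m) × Bool ≃ Finset (Fin (m+1)) where
  toFun p := if p.2 then insert 0 (p.1.map (Fin.succEmb m)) else p.1.map (Fin.succEmb m)
  invFun S := (S.preimage Fin.succ (Fin.succ_injective m).injOn,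
    decide ((0 : Fin (m+1)) ∈ S))
  left_inv := by
    rintro ⟨T, b⟩
    cases b <;> simp [pre1, pre2, zero_not_mem_map m T]
  right_inv := by
    intro S
    by_cases h0 : (0 : Fin (m+1)) ∈ S <;>
      · simp only [h0, decide_true, decide_false, if_true, if_false]
        ext i
        induction i using Fin.cases <;>
          simp [Finset.mem_preimage, Fin.succEmb, Fin.succ_ne_zero, h0]

/-- Expectation of a function of `m` i.i.d. Bernoulli ±1 random variables,
realized as the average over the uniform measure on `{±1}^m`. -/
noncomputable def bernExp (m : ℕ) (g : (Fin m → ℝ) → ℝ) : ℝ :=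
  (∑ y : Fin m → Bool, g (fun i => if y i then 1 else -1)) / 2 ^ m

lemma prod_map_cons (m : ℕ) (y₀ : ℝ) (y : Fin m → ℝ) (T : Finset (Fin m)) :
    ∏ i ∈ T.map (Fin.succEmb m), Fin.cons y₀ y i = ∏ j ∈ T, y j := by
  rw [Finset.prod_map]; simp [Fin.succEmb]

lemma poly_split (m : ℕ) (c : Finset (Fin (m+1)) → ℝ) (y₀ : ℝ) (y : Fin m → ℝ) :
    ∑ S : Finset (Fin (m+1)), c S * ∏ i ∈ S, Fin.cons y₀ y i
      = (∑ T : Finset (Fin m), c (T.map (Fin.succEmb m)) * ∏ i ∈ T, y i)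
        + y₀ * ∑ T : Finset (Fin m), c (insert 0 (T.map (Fin.succEmb m))) * ∏ i ∈ T, y i := by
  rw [← Equiv.sum_comp (fsEquiv m), Fintype.sum_prod_type]
  simp only [fsEquiv, Equiv.coe_fn_mk, Fintype.sum_bool, Bool.false_eq_true, if_true, if_false]
  rw [Finset.mul_sum, ← Finset.sum_add_distrib]
  refine Finset.sum_congr rfl fun T _ => ?_
  rw [Finset.prod_insert (zero_not_mem_map m T), prod_map_cons, Fin.cons_zero]
  ring

lemma bernExp_rec (m : ℕ) (g : (Fin (m+1) → ℝ) → ℝ) :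
    bernExp (m+1) g = (bernExp m (fun y => g (Fin.cons 1 y))
      + bernExp m (fun y => g (Fin.cons (-1) y))) / 2 := by
  unfold bernExp
  rw [← Equiv.sum_comp (Fin.consEquiv fun _ => Bool), Fintype.sum_prod_type]
  have key : ∀ (b : Bool) (z : Fin m → Bool),
      (fun i => if (Fin.cons b z : Fin (m+1) → Bool) i then (1:ℝ) else -1)
        = Fin.cons (if b then 1 else -1) (fun i => if z i then 1 else -1) := by
    intro b z; funext i
    induction i using Fin.cases <;> simp
  simp only [Fin.consEquiv, Equiv.coe_fn_mk, key, Fintype.sum_bool, if_true, if_false]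
  rw [pow_succ]
  field_simp
  congr 1 <;> refine Finset.sum_congr rfl fun x _ => ?_ <;> congr 1 <;> funext i <;>
    induction i using Fin.cases <;> simp

lemma bernExp_add (m : ℕ) (a b : (Fin m → ℝ) → ℝ) :
    bernExp m (fun y => a y + b y) = bernExp m a + bernExp m b := by
  simp [bernExp, Finset.sum_add_distrib, add_div]

lemma bernExp_smul (m : ℕ) (r : ℝ) (a : (Fin m → ℝ) → ℝ) :
    bernExp m (fun y => r * a y) = r * bernExp m a := by
  simp [bernExp, ← Finset.mul_sum, mul_div_assoc]

lemma bernExp_nonneg (m : ℕ) (a : (Fin m → ℝ) → ℝ) (ha : ∀ y, 0 ≤ a y) :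
    0 ≤ bernExp m a := by
  apply div_nonneg _ (by positivity)
  exact Finset.sum_nonneg fun _ _ => ha _

lemma bernExp_cs (m : ℕ) (G H : (Fin m → ℝ) → ℝ) :
    bernExp m (fun y => G y ^ 2 * H y ^ 2) ^ 2
      ≤ bernExp m (fun y => G y ^ 4) * bernExp m (fun y => H y ^ 4) := by
  unfold bernExp
  rw [div_pow, div_mul_div_comm, show ((2:ℝ)^m)^2 = 2^m * 2^m from sq _]
  have h := Finset.sum_mul_sq_le_sq_mul_sq Finset.univ
    (fun y : Fin m → Bool => G (fun i => if y i then 1 else -1) ^ 2)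
    (fun y : Fin m → Bool => H (fun i => if y i then 1 else -1) ^ 2)
  simp only [← pow_mul] at h
  norm_num at h
  exact div_le_div_of_nonneg_right h (by positivity)

lemma combine (t : ℕ) (g2 h2 g4 h4 A : ℝ)
    (hg2 : 0 ≤ g2) (hh2 : 0 ≤ h2) (hA : 0 ≤ A)
    (hg4nn : 0 ≤ g4) (hh4nn : 0 ≤ h4)
    (hg4 : g4 ≤ 9 ^ (t+1) * g2 ^ 2) (hh4 : h4 ≤ 9 ^ t * h2 ^ 2)
    (hcs : A ^ 2 ≤ g4 * h4) :
    g4 + 6 * A + h4 ≤ 9 ^ (t+1) * (g2 + h2) ^ 2 := by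
  have h93 : ∀ n : ℕ, (9:ℝ) ^ n = 3 ^ (2 * n) := by
    intro n; rw [pow_mul]; norm_num
  have hQ : (0:ℝ) ≤ 3 ^ (2*t+1) * (g2 * h2) := by positivity
  have hpow : (9:ℝ) ^ (t+1) * 9 ^ t = (3 ^ (2*t+1)) ^ 2 := by
    rw [h93, h93, ← pow_add, ← pow_mul]; congr 1; ring
  have hA2 : A ^ 2 ≤ (3 ^ (2*t+1) * (g2 * h2)) ^ 2 := by
    calc A ^ 2 ≤ g4 * h4 := hcs
      _ ≤ (9 ^ (t+1) * g2 ^ 2) * (9 ^ t * h2 ^ 2) :=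
          mul_le_mul hg4 hh4 hh4nn (by positivity)
      _ = (9 ^ (t+1) * 9 ^ t) * (g2 * h2) ^ 2 := by ring
      _ = (3 ^ (2*t+1)) ^ 2 * (g2 * h2) ^ 2 := by rw [hpow]
      _ = (3 ^ (2*t+1) * (g2 * h2)) ^ 2 := by ring
  have key : A ≤ 3 ^ (2*t+1) * (g2 * h2) := by nlinarith [hA2, hA, hQ]
  have e9 : (9:ℝ) ^ (t+1) = 3 * 3 ^ (2*t+1) := by
    rw [h93, show 2*(t+1) = (2*t+1)+1 by ring, pow_succ]; ring
  have hh4' : h4 ≤ 9 ^ (t+1) * h2 ^ 2 :=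
    hh4.trans (mul_le_mul_of_nonneg_right
      (pow_le_pow_right₀ (by norm_num) (Nat.le_succ t)) (sq_nonneg h2))
  have h6A : 6 * A ≤ 2 * 9 ^ (t+1) * (g2 * h2) := by
    rw [e9]; linarith
  have expand : (9:ℝ) ^ (t+1) * (g2 + h2) ^ 2
      = 9 ^ (t+1) * g2 ^ 2 + 2 * 9 ^ (t+1) * (g2 * h2) + 9 ^ (t+1) * h2 ^ 2 := by ring
  rw [expand]; linarith

lemma fourth_moment (m : ℕ) (G H : (Fin m → ℝ) → ℝ) :
    (bernExp m (fun y => (G y + 1 * H y) ^ 4) + bernExp m (fun y => (G y + -1 * H y) ^ 4)) / 2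
      = bernExp m (fun y => G y ^ 4) + 6 * bernExp m (fun y => G y ^ 2 * H y ^ 2)
        + bernExp m (fun y => H y ^ 4) := by
  unfold bernExp
  rw [← add_div]
  have hsum : (∑ y : Fin m → Bool,
        (G (fun i => if y i then 1 else -1) + 1 * H (fun i => if y i then 1 else -1)) ^ 4
      + ∑ y : Fin m → Bool,
        (G (fun i => if y i then 1 else -1) + -1 * H (fun i => if y i then 1 else -1)) ^ 4)
      = 2 * (∑ y : Fin m → Bool, G (fun i => if y i then 1 else -1) ^ 4)
        + 12 * (∑ y : Fin m → Bool, G (fun i => if y i then 1 else -1) ^ 2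
            * H (fun i => if y i then 1 else -1) ^ 2)
        + 2 * (∑ y : Fin m → Bool, H (fun i => if y i then 1 else -1) ^ 4) := by
    rw [← Finset.sum_add_distrib, Finset.mul_sum, Finset.mul_sum, Finset.mul_sum,
      ← Finset.sum_add_distrib, ← Finset.sum_add_distrib]
    exact Finset.sum_congr rfl fun y _ => by ring
  rw [hsum]
  ring

lemma second_moment (m : ℕ) (G H : (Fin m → ℝ) → ℝ) :
    (bernExp m (fun y => (G y + 1 * H y) ^ 2) + bernExp m (fun y => (G y + -1 * H y) ^ 2)) / 2
      = bernExp m (fun y => G y ^ 2) + bernExp m (fun y => H y ^ 2) := by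
  unfold bernExp
  rw [← add_div]
  have hsum : (∑ y : Fin m → Bool,
        (G (fun i => if y i then 1 else -1) + 1 * H (fun i => if y i then 1 else -1)) ^ 2
      + ∑ y : Fin m → Bool,
        (G (fun i => if y i then 1 else -1) + -1 * H (fun i => if y i then 1 else -1)) ^ 2)
      = 2 * (∑ y : Fin m → Bool, G (fun i => if y i then 1 else -1) ^ 2)
        + 2 * (∑ y : Fin m → Bool, H (fun i => if y i then 1 else -1) ^ 2) := by
    rw [← Finset.sum_add_distrib, Finset.mul_sum, Finset.mul_sum, ← Finset.sum_add_distrib]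
    exact Finset.sum_congr rfl fun y _ => by ring
  rw [hsum]
  ring

lemma main : ∀ (m : ℕ) (s : ℕ) (c : Finset (Fin m) → ℝ),
    (∀ S : Finset (Fin m), s < S.card → c S = 0) →
    bernExp m (fun Y => (∑ S : Finset (Fin m), c S * ∏ i ∈ S, Y i) ^ 4)
      ≤ 9 ^ s * bernExp m (fun Y => (∑ S : Finset (Fin m), c S * ∏ i ∈ S, Y i) ^ 2) ^ 2 := by
  intro m
  induction m with
  | zero =>
    intro s c _
    have h9 : (1:ℝ) ≤ 9 ^ s := one_le_pow₀ (by norm_num)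
    simp only [bernExp]
    norm_num
    have key : ∀ a : ℝ, a ^ 4 ≤ 9 ^ s * (a ^ 2) ^ 2 := fun a => by nlinarith [sq_nonneg (a ^ 2)]
    exact key _
  | succ m ih =>
    intro s c hdeg
    rw [bernExp_rec, bernExp_rec]
    simp only [poly_split]
    rw [fourth_moment m (fun y => ∑ T : Finset (Fin m), c (Finset.map (Fin.succEmb m) T) * ∏ i ∈ T, y i) (fun y => ∑ T : Finset (Fin m), c (insert 0 (Finset.map (Fin.succEmb m) T)) * ∏ i ∈ T, y i), second_moment m (fun y => ∑ T : Finset (Fin m), c (Finset.map (Fin.succEmb m) T) * ∏ i ∈ T, y i) (fun y => ∑ T : Finset (Fin m), c (insert 0 (Finset.map (Fin.succEmb m) T)) * ∏ i ∈ T, y i)]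
    have hG := ih s (fun T => c (Finset.map (Fin.succEmb m) T))
      (fun T hT => hdeg _ (by rwa [Finset.card_map]))
    cases s with
    | zero =>
      have hH0 : ∀ T : Finset (Fin m), c (insert 0 (Finset.map (Fin.succEmb m) T)) = 0 := by
        intro T
        refine hdeg _ ?_
        rw [Finset.card_insert_of_notMem (zero_not_mem_map m T)]
        exact Nat.succ_pos _
      simp only [hH0, zero_mul, Finset.sum_const_zero, pow_zero, one_mul] at hG ⊢
      have h04 : (bernExp m fun _ : Fin m → ℝ => (0:ℝ) ^ 4) = 0 := by simp [bernExp]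
      have h02 : (bernExp m fun _ : Fin m → ℝ => (0:ℝ) ^ 2) = 0 := by simp [bernExp]
      have hmid : (bernExp m fun y : Fin m → ℝ =>
          (∑ T : Finset (Fin m), c (Finset.map (Fin.succEmb m) T) * ∏ i ∈ T, y i) ^ 2 * (0:ℝ) ^ 2)
            = 0 := by simp [bernExp]
      rw [h04, h02, hmid]
      simpa using hG
    | succ t =>
      have hdeg1 : ∀ T : Finset (Fin m), t < T.card →
          c (insert 0 (Finset.map (Fin.succEmb m) T)) = 0 := by
        intro T hT
        refine hdeg _ ?_
        rw [Finset.card_insert_of_notMem (zero_not_mem_map m T), Finset.card_map]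
        omega
      have hH := ih t (fun T => c (insert 0 (Finset.map (Fin.succEmb m) T))) hdeg1
      have hcs := bernExp_cs m (fun y => ∑ T : Finset (Fin m), c (Finset.map (Fin.succEmb m) T) * ∏ i ∈ T, y i) (fun y => ∑ T : Finset (Fin m), c (insert 0 (Finset.map (Fin.succEmb m) T)) * ∏ i ∈ T, y i)
      have hg2 : 0 ≤ bernExp m (fun y => (fun y => ∑ T : Finset (Fin m), c (Finset.map (Fin.succEmb m) T) * ∏ i ∈ T, y i) y ^ 2) :=
        bernExp_nonneg _ _ fun y => by positivity
      have hh2 : 0 ≤ bernExp m (fun y => (fun y => ∑ T : Finset (Fin m), c (insert 0 (Finset.map (Fin.succEmb m) T)) * ∏ i ∈ T, y i) y ^ 2) :=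
        bernExp_nonneg _ _ fun y => by positivity
      have hA : 0 ≤ bernExp m (fun y => (fun y => ∑ T : Finset (Fin m), c (Finset.map (Fin.succEmb m) T) * ∏ i ∈ T, y i) y ^ 2 * (fun y => ∑ T : Finset (Fin m), c (insert 0 (Finset.map (Fin.succEmb m) T)) * ∏ i ∈ T, y i) y ^ 2) :=
        bernExp_nonneg _ _ fun y => by positivity
      have hg4 : 0 ≤ bernExp m (fun y => (fun y => ∑ T : Finset (Fin m), c (Finset.map (Fin.succEmb m) T) * ∏ i ∈ T, y i) y ^ 4) :=
        bernExp_nonneg _ _ fun y => by positivity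
      have hh4 : 0 ≤ bernExp m (fun y => (fun y => ∑ T : Finset (Fin m), c (insert 0 (Finset.map (Fin.succEmb m) T)) * ∏ i ∈ T, y i) y ^ 4) :=
        bernExp_nonneg _ _ fun y => by positivity
      exact combine t _ _ _ _ _ hg2 hh2 hA hg4 hh4 hG hH hcs

theorem stmt2 (m s : ℕ) (c : Finset (Fin m) → ℝ)
    (hdeg : ∀ S : Finset (Fin m), s < S.card → c S = 0) :
    bernExp m (fun Y => (∑ S : Finset (Fin m), c S * ∏ i ∈ S, Y i) ^ 4)
      ≤ 9 ^ s * bernExp m (fun Y => (∑ S : Finset (Fin m), c S * ∏ i ∈ S, Y i) ^ 2) ^ 2 :=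
  main m s c hdeg
end
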